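/- Let T(x) = 2x (mod 1) be the doubling map on [0,1). For every ρ ∈ [0,1) there exists a T-invariant Borel probability measure μ on [0,1) whose barycentre equals ρ, i.e. ∫ x dμ(x) = ρ. (In particular, the set M_ρ of ×2-invariant Borel probability measures with barycentre ρ is nonempty.) -/

import Mathlib

open MeasureTheory
open scoped ENNReal

lemma my_integrable_dirac {f : ℝ → ℝ} (hf : Measurable f) (a : ℝ) :
    Integrable f (Measure.dirac a) := by
  constructor
  · exact hf.aestronglyMeasurable
  · rw [HasFiniteIntegral, lintegral_dirac]
    exact ENNReal.coe_lt_top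

/-- For the doubling map `T(x) = 2x (mod 1)` on `[0,1)` and every `ρ ∈ [0,1)`, there exists a
`T`-invariant Borel probability measure with barycentre `ρ`, i.e. `∫ x dμ(x) = ρ`; in
particular the set `M_ρ` of `×2`-invariant Borel probability measures with barycentre `ρ` is
nonempty. -/
theorem exists_doubling_invariant_measure_with_barycentre
    (ρ : ℝ) (hρ : ρ ∈ Set.Ico (0 : ℝ) 1) :
    ∃ μ : Measure ℝ, IsProbabilityMeasure μ ∧
      MeasurePreserving (fun x => Int.fract (2 * x)) μ μ ∧
      ∫ x, x ∂μ = ρ := by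
  obtain ⟨hρ0, hρ1⟩ := hρ
  obtain ⟨N, hN⟩ := exists_nat_ge (1 / (1 - ρ))
  set n : ℕ := max N 2 with hn_def
  have hn2 : (2 : ℕ) ≤ n := le_max_right _ _
  haveI : NeZero n := ⟨by omega⟩
  have hnR : (2 : ℝ) ≤ (n : ℝ) := by exact_mod_cast hn2
  -- ρ * n ≤ n - 1
  have h1ρ : (0 : ℝ) < 1 - ρ := by linarith
  have hρn : ρ * n ≤ (n : ℝ) - 1 := by
    have hNn : (N : ℝ) ≤ n := by exact_mod_cast le_max_left N 2
    have : 1 / (1 - ρ) ≤ (n : ℝ) := le_trans hN hNn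
    have h2 : 1 ≤ (1 - ρ) * n := by
      rw [div_le_iff₀ h1ρ] at this; linarith
    nlinarith
  -- the weight t
  set t : ℝ := ρ * n / ((n : ℝ) - 1) with ht_def
  have hn1 : (0 : ℝ) < (n : ℝ) - 1 := by linarith
  have ht0 : 0 ≤ t := by positivity
  have ht1 : t ≤ 1 := by
    rw [ht_def, div_le_one hn1]; linarith
  -- the periodic orbit
  have hD : (0 : ℝ) < 2 ^ n - 1 := by
    have : (2 : ℝ) ≤ 2 ^ n := by
      calc (2:ℝ) = 2 ^ 1 := (pow_one 2).symm
      _ ≤ 2 ^ n := by apply pow_le_pow_right₀ (by norm_num); omega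
    linarith
  set x : Fin n → ℝ := fun k => (2 ^ n - 2 ^ (k : ℕ) - 1) / (2 ^ n - 1) with hx_def
  have hpowlt : ∀ k : Fin n, (2 : ℝ) ^ (k : ℕ) ≤ 2 ^ (n - 1) := by
    intro k
    apply pow_le_pow_right₀ (by norm_num)
    omega
  have hpowhalf : (2 : ℝ) ^ (n - 1) * 2 = 2 ^ n := by
    rw [← pow_succ]
    congr 1
    omega
  have hx01 : ∀ k : Fin n, x k ∈ Set.Ico (0 : ℝ) 1 := by
    intro k
    constructor
    · apply div_nonneg _ (le_of_lt hD)
      have h1 := hpowlt k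
      have h2 : (1:ℝ) ≤ 2 ^ (n-1) := one_le_pow₀ (by norm_num)
      nlinarith [hpowhalf]
    · rw [div_lt_one hD]
      have : (0:ℝ) < 2 ^ (k : ℕ) := by positivity
      linarith
  -- key step: T permutes the orbit cyclically
  have hval : ∀ k : Fin n, ((k + 1 : Fin n) : ℕ) = ((k : ℕ) + 1) % n := by
    intro k
    have h1 : ((1 : Fin n) : ℕ) = 1 := by
      rw [Fin.val_one' n]; exact Nat.mod_eq_of_lt (by omega)
    rw [Fin.val_add, h1]
  have hstep : ∀ k : Fin n, Int.fract (2 * x k) = x (k + 1) := by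
    intro k
    rcases lt_or_eq_of_le (Nat.succ_le_of_lt k.isLt) with hk | hk
    · -- k + 1 < n
      have hv : ((k + 1 : Fin n) : ℕ) = (k : ℕ) + 1 := by
        rw [hval k, Nat.mod_eq_of_lt hk]
      have heq : 2 * x k = x (k + 1) + 1 := by
        rw [hx_def]
        simp only [hv]
        field_simp
        ring
      rw [heq]
      rw [show x (k+1) + 1 = x (k+1) + (1:ℤ) by norm_num, Int.fract_add_intCast,
        Int.fract_eq_self.2 ⟨(hx01 _).1, (hx01 _).2⟩]
    · -- k + 1 = n, wraps to 0
      have hkn : (k : ℕ) + 1 = n := hk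
      have hv : ((k + 1 : Fin n) : ℕ) = 0 := by
        rw [hval k, hkn, Nat.mod_self]
      have hkv : (k : ℕ) = n - 1 := by omega
      have heq : 2 * x k = x (k + 1) := by
        rw [hx_def]
        simp only [hv, hkv, pow_zero]
        field_simp
        linarith [hpowhalf]
      rw [heq, Int.fract_eq_self.2 ⟨(hx01 _).1, (hx01 _).2⟩]
  -- the measure
  have hT : Measurable (fun y : ℝ => Int.fract (2 * y)) :=
    measurable_fract.comp (measurable_const_mul 2)
  set μ : Measure ℝ := ENNReal.ofReal (1 - t) • Measure.dirac 0
      + ENNReal.ofReal (t / n) • ∑ k : Fin n, Measure.dirac (x k) with hμ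
  have hnn : (0:ℝ) ≤ t / n := by positivity
  refine ⟨μ, ?_, ?_, ?_⟩
  · -- probability measure
    constructor
    rw [hμ]
    rw [Measure.add_apply, Measure.smul_apply, Measure.smul_apply,
      Measure.finset_sum_apply]
    simp only [measure_univ, smul_eq_mul, mul_one, Finset.sum_const,
      Finset.card_univ, Fintype.card_fin, nsmul_eq_mul]
    rw [show ((n : ℕ) : ℝ≥0∞) = ENNReal.ofReal (n : ℝ) by
        rw [ENNReal.ofReal_natCast],
      ← ENNReal.ofReal_mul hnn, div_mul_cancel₀ _ (by positivity : (n:ℝ) ≠ 0),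
      ← ENNReal.ofReal_add (by linarith) ht0]
    norm_num
  · -- invariance
    refine ⟨hT, ?_⟩
    rw [hμ, Measure.map_add _ _ hT, Measure.map_smul, Measure.map_smul,
      Measure.map_dirac' hT]
    have h0 : Int.fract (2 * (0:ℝ)) = 0 := by norm_num
    rw [h0]
    have hsum : Measure.map (fun y : ℝ => Int.fract (2 * y))
        (∑ k : Fin n, Measure.dirac (x k)) = ∑ k : Fin n, Measure.dirac (x k) := by
      have h1 : Measure.map (fun y : ℝ => Int.fract (2 * y))
          (∑ k : Fin n, Measure.dirac (x k))
          = ∑ k : Fin n, Measure.map (fun y : ℝ => Int.fract (2 * y))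
              (Measure.dirac (x k)) := by
        classical
        induction (Finset.univ : Finset (Fin n)) using Finset.induction with
        | empty => simp
        | @insert a s hni ih =>
            rw [Finset.sum_insert hni, Finset.sum_insert hni, Measure.map_add _ _ hT, ih]
      rw [h1]
      have h2 : ∀ k : Fin n, Measure.map (fun y : ℝ => Int.fract (2 * y))
          (Measure.dirac (x k)) = Measure.dirac (x (k + 1)) := by
        intro k
        rw [Measure.map_dirac' hT, hstep k]
      simp only [h2]
      exact Equiv.sum_comp (Equiv.addRight 1) (fun k => Measure.dirac (x k))
    rw [hsum]
  · -- barycentre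
    have hint0 : Integrable (fun y : ℝ => y)
        (ENNReal.ofReal (1 - t) • Measure.dirac (0:ℝ)) :=
      (my_integrable_dirac measurable_id 0).smul_measure ENNReal.ofReal_ne_top
    have hint1 : Integrable (fun y : ℝ => y)
        (ENNReal.ofReal (t / n) • ∑ k : Fin n, Measure.dirac (x k)) := by
      apply Integrable.smul_measure _ ENNReal.ofReal_ne_top
      exact integrable_finset_sum_measure.2 fun k _ => my_integrable_dirac measurable_id _
    rw [hμ, integral_add_measure hint0 hint1, integral_smul_measure, integral_smul_measure,
      integral_finset_sum_measure (fun k _ => my_integrable_dirac (f := fun y : ℝ => y) measurable_id _)]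
    simp only [integral_dirac]
    rw [ENNReal.toReal_ofReal (by linarith), ENNReal.toReal_ofReal hnn]
    have hsumx : ∑ k : Fin n, x k = (n : ℝ) - 1 := by
      rw [hx_def]
      rw [← Finset.sum_div]
      rw [Fin.sum_univ_eq_sum_range (fun i => (2:ℝ)^n - 2^i - 1)]
      have hg : ∑ i ∈ Finset.range n, (2:ℝ)^i = 2^n - 1 := by
        have := geom_sum_eq (show (2:ℝ) ≠ 1 by norm_num) n
        rw [this]; ring
      have : ∑ i ∈ Finset.range n, ((2:ℝ)^n - 2^i - 1)
          = n * 2^n - (2^n - 1) - n := by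
        rw [Finset.sum_sub_distrib, Finset.sum_sub_distrib, hg]
        simp [Finset.sum_const, Finset.card_range]
      rw [this]
      field_simp
      ring
    rw [hsumx]
    rw [ht_def]
    simp only [smul_eq_mul, mul_zero, zero_add]
    field_simp
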